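/- Let A = Z/2[y_4, y_6] be a graded polynomial ring with deg y_4 = 4, deg y_6 = 6, let B = Z/2[x_2, x_4] with deg x_2 = 2, deg x_4 = 4, and make B an A-module via the ring map π^* with π^*(y_4) = x_2^2 + x_4 and π^*(y_6) = x_2 x_4. Then B is a free A-module with basis {1, x_2, x_2^2}. -/

import Mathlib

open MvPolynomial

noncomputable section

/-- `A = ℤ/2[y₄, y₆]` (the cohomology of `BSU(3)`). -/
abbrev A15 := MvPolynomial (Fin 2) (ZMod 2)
/-- `B = ℤ/2[x₂, x₄]` (the cohomology of `BS(U(2)×U(1))`). -/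
abbrev B15 := MvPolynomial (Fin 2) (ZMod 2)

def y₄ : A15 := X 0
def y₆ : A15 := X 1
def x₂ : B15 := X 0
def x₄ : B15 := X 1

/-- The ring map `π* : A → B` with `π*(y₄) = x₂² + x₄`, `π*(y₆) = x₂ x₄`. -/
def πs : A15 →+* B15 := (aeval ![x₂ ^ 2 + x₄, x₂ * x₄] : A15 →ₐ[ZMod 2] B15).toRingHom

lemma two_zero {R : Type*} [CommRing R] [Algebra (ZMod 2) R] : (2 : R) = 0 := by
  rw [show (2 : R) = algebraMap (ZMod 2) R 2 from (map_ofNat _ 2).symm,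
    show (2 : ZMod 2) = 0 from rfl, map_zero]

lemma πs_y₄ : πs y₄ = x₂ ^ 2 + x₄ := by simp [πs, y₄]
lemma πs_y₆ : πs y₆ = x₂ * x₄ := by simp [πs, y₆]

def fcub : Polynomial A15 := Polynomial.X ^ 3 + Polynomial.C y₄ * Polynomial.X + Polynomial.C y₆

lemma fcub_monic : fcub.Monic := by unfold fcub; monicity!

def ψ : B15 →+* AdjoinRoot fcub :=
  (aeval ![AdjoinRoot.root fcub, algebraMap A15 _ y₄ + (AdjoinRoot.root fcub) ^ 2] :
      B15 →ₐ[ZMod 2] AdjoinRoot fcub).toRingHom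

lemma ψ_x₂ : ψ x₂ = AdjoinRoot.root fcub := by simp [ψ, x₂]
lemma ψ_x₄ : ψ x₄ = algebraMap A15 _ y₄ + (AdjoinRoot.root fcub) ^ 2 := by simp [ψ, x₄]

lemma root_cube : (AdjoinRoot.root fcub) ^ 3
    = algebraMap A15 _ y₄ * AdjoinRoot.root fcub + algebraMap A15 _ y₆ := by
  have h : (Polynomial.aeval (AdjoinRoot.root fcub))
        (Polynomial.X ^ 3 + Polynomial.C y₄ * Polynomial.X + Polynomial.C y₆)
      = AdjoinRoot.mk fcub fcub := AdjoinRoot.aeval_eq _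
  rw [AdjoinRoot.mk_self] at h
  simp only [map_add, map_mul, map_pow, Polynomial.aeval_X, Polynomial.aeval_C] at h
  have h2 : (2 : AdjoinRoot fcub) = 0 := two_zero
  linear_combination h - (algebraMap A15 (AdjoinRoot fcub) y₄ * AdjoinRoot.root fcub
    + algebraMap A15 (AdjoinRoot fcub) y₆) * h2

lemma ψ_πs (a : A15) : ψ (πs a) = algebraMap A15 (AdjoinRoot fcub) a := by
  have : (ψ.comp πs) = (algebraMap A15 (AdjoinRoot fcub)) := by
    apply MvPolynomial.ringHom_ext
    · intro r
      exact RingHom.congr_fun (RingHom.ext_zmod ((ψ.comp πs).comp (C : ZMod 2 →+* A15))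
        ((algebraMap A15 (AdjoinRoot fcub)).comp (C : ZMod 2 →+* A15))) r
    · intro i
      have h2 : (2 : AdjoinRoot fcub) = 0 := two_zero
      fin_cases i
      · show ψ (πs (y₄)) = algebraMap A15 _ y₄
        rw [πs_y₄, map_add, map_pow, ψ_x₂, ψ_x₄]
        linear_combination (AdjoinRoot.root fcub ^ 2) * h2
      · show ψ (πs (y₆)) = algebraMap A15 _ y₆
        rw [πs_y₆, map_mul, ψ_x₂, ψ_x₄]
        linear_combination root_cube + (algebraMap A15 (AdjoinRoot fcub) y₄
          * AdjoinRoot.root fcub) * h2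
  exact RingHom.congr_fun this a

lemma uniq_core (e : Fin 3 → A15) (h : ∑ i : Fin 3, πs (e i) * x₂ ^ (i : ℕ) = 0) : e = 0 := by
  have h0 : ψ (∑ i : Fin 3, πs (e i) * x₂ ^ (i : ℕ)) = 0 := by rw [h]; simp
  rw [map_sum] at h0
  simp only [map_mul, map_pow, ψ_πs, ψ_x₂] at h0
  have key : AdjoinRoot.mk fcub (∑ i : Fin 3, Polynomial.C (e i) * Polynomial.X ^ (i : ℕ)) = 0 := by
    rw [map_sum]
    simpa only [map_mul, map_pow, AdjoinRoot.mk_C, AdjoinRoot.mk_X, AdjoinRoot.algebraMap_eq] using h0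
  rw [AdjoinRoot.mk_eq_zero] at key
  have hdeg : (∑ i : Fin 3, Polynomial.C (e i) * Polynomial.X ^ (i : ℕ)).degree < fcub.degree := by
    have hd : fcub.degree = 3 := by unfold fcub; compute_degree!
    rw [hd]
    apply lt_of_le_of_lt (Polynomial.degree_sum_le _ _)
    apply Finset.sup_lt_iff (by decide : (⊥ : WithBot ℕ) < 3) |>.mpr
    intro i _
    apply lt_of_le_of_lt (Polynomial.degree_C_mul_X_pow_le _ _)
    exact_mod_cast Nat.cast_lt.mpr i.isLt
  have hzero := Polynomial.eq_zero_of_dvd_of_degree_lt key hdeg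
  funext i
  have hc := congrArg (fun p => Polynomial.coeff p (i : ℕ)) hzero
  simp only [Polynomial.coeff_zero] at hc
  rw [Polynomial.finset_sum_coeff] at hc
  simp only [Polynomial.coeff_C_mul, Polynomial.coeff_X_pow] at hc
  fin_cases i <;> simpa [Fin.sum_univ_three] using hc



lemma two_zeroB : (2 : B15) = 0 := two_zero

lemma hcube : x₂ ^ 3 = πs y₄ * x₂ + πs y₆ := by
  rw [πs_y₄, πs_y₆]
  linear_combination (-(x₂ * x₄)) * two_zeroB

lemma hx4 : x₄ = πs y₄ + x₂ ^ 2 := by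
  rw [πs_y₄]
  linear_combination (-(x₂ ^ 2)) * two_zeroB

lemma exist_core (b : B15) : ∃ c : Fin 3 → A15, b = ∑ i : Fin 3, πs (c i) * x₂ ^ (i : ℕ) := by
  induction b using MvPolynomial.induction_on with
  | C a =>
    refine ⟨![MvPolynomial.C a, 0, 0], ?_⟩
    simp [Fin.sum_univ_three, πs]
  | add p q hp hq =>
    obtain ⟨c, hc⟩ := hp
    obtain ⟨d, hd⟩ := hq
    refine ⟨c + d, ?_⟩
    simp only [Pi.add_apply, map_add, add_mul, Finset.sum_add_distrib, ← hc, ← hd]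
  | mul_X p i hp =>
    obtain ⟨c, hc⟩ := hp
    fin_cases i
    · refine ⟨![y₆ * c 2, c 0 + y₄ * c 2, c 1], ?_⟩
      show p * x₂ = _
      rw [hc]
      simp only [Fin.sum_univ_three, Matrix.cons_val_zero, Matrix.cons_val_one, Matrix.head_cons,
        Matrix.cons_val_two, Matrix.tail_cons, map_add, map_mul, Fin.val_zero, Fin.val_one,
        Fin.val_two, pow_zero, pow_one]
      linear_combination πs (c 2) * hcube
    · refine ⟨![y₄ * c 0 + y₆ * c 1, y₆ * c 2, c 0], ?_⟩
      show p * x₄ = _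
      rw [hc, hx4]
      simp only [Fin.sum_univ_three, Matrix.cons_val_zero, Matrix.cons_val_one, Matrix.head_cons,
        Matrix.cons_val_two, Matrix.tail_cons, map_add, map_mul, Fin.val_zero, Fin.val_one,
        Fin.val_two, pow_zero, pow_one]
      linear_combination (πs (c 1) + πs (c 2) * x₂) * hcube
        + (πs y₄ * πs (c 1) * x₂ + πs y₄ * πs (c 2) * x₂ ^ 2) * two_zeroB


/-- Leray–Hirsch: `B` is a free `A`-module (via `π*`) with basis `{1, x₂, x₂²}`:
every element of `B` is uniquely of the form `Σ_{i<3} π*(cᵢ)·x₂^i`. -/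
theorem stmt_15 (b : B15) :
    ∃! c : Fin 3 → A15, b = ∑ i : Fin 3, πs (c i) * x₂ ^ (i : ℕ) := by
  obtain ⟨c, hc⟩ := exist_core b
  refine ⟨c, hc, ?_⟩
  intro d hd
  have h0 : ∑ i : Fin 3, πs ((d - c) i) * x₂ ^ (i : ℕ) = 0 := by
    simp only [Pi.sub_apply, map_sub, sub_mul, Finset.sum_sub_distrib, ← hc, ← hd, sub_self]
  have := uniq_core _ h0
  funext i
  have := congrFun this i
  simpa [sub_eq_zero] using this

end
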